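/- Let F be a field, p a monic irreducible polynomial of degree s over F, and G ∈ M_{sℓ}(F) the generalized Jordan block of size ℓ associated with p. Then the set Z(G) = {X ∈ M_{sℓ}(F) : GX = XG} is an F-vector subspace of M_{sℓ}(F) of dimension ℓs. -/

import Mathlib

open Matrix Polynomial

/-- The companion matrix of a monic polynomial `p` of degree `s`:
ones on the first subdiagonal, `-(coefficients of p)` in the last column. -/
def companionMat (F : Type*) [Field F] (s : ℕ) (p : Polynomial F) :
    Matrix (Fin s) (Fin s) F :=
  Matrix.of fun i j =>
    if (j : ℕ) = s - 1 then -p.coeff (i : ℕ)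
    else if (i : ℕ) = (j : ℕ) + 1 then 1 else 0

/-- The matrix `E` whose `(1,s)` entry is `1` and all other entries are `0`. -/
def Emat (F : Type*) [Field F] (s : ℕ) : Matrix (Fin s) (Fin s) F :=
  Matrix.of fun i j => if (i : ℕ) = 0 ∧ (j : ℕ) = s - 1 then 1 else 0

/-- The generalized Jordan block of size `ℓ` associated with `p` (degree `s`):
the `sℓ × sℓ` block matrix with `ℓ` diagonal `s×s` blocks equal to the companion
matrix `C` of `p`, blocks `E` directly below the diagonal, zeros elsewhere.
Rows/columns are indexed by `Fin ℓ × Fin s` (block index, index within block). -/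
def genJordanBlock (F : Type*) [Field F] (s ℓ : ℕ) (p : Polynomial F) :
    Matrix (Fin ℓ × Fin s) (Fin ℓ × Fin s) F :=
  Matrix.of fun x y =>
    if x.1 = y.1 then companionMat F s p x.2 y.2
    else if (x.1 : ℕ) = (y.1 : ℕ) + 1 then Emat F s x.2 y.2 else 0

section Aux

variable {F : Type*} [Field F] {s ℓ : ℕ}

lemma mySum_mulVec {ι : Type*} {n : Type*} [Fintype n] (t : Finset ι)
    (f : ι → Matrix n n F) (v : n → F) :
    (∑ i ∈ t, f i) *ᵥ v = ∑ i ∈ t, f i *ᵥ v := by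
  classical
  induction t using Finset.induction_on with
  | empty => simp
  | insert _ _ h ih => simp [Finset.sum_insert h, Matrix.add_mulVec, ih]

lemma mySum_smul_single {ι : Type*} [Fintype ι] [DecidableEq ι] (w : ι → F) :
    ∑ y : ι, w y • (Pi.single y 1 : ι → F) = w := by
  funext x
  rw [Finset.sum_apply]
  simp only [Pi.smul_apply, Pi.single_apply, smul_eq_mul, mul_ite, mul_one, mul_zero]
  rw [Finset.sum_ite_eq Finset.univ x w]
  simp

lemma sum_coeff_single_apply (c : Fin s → F) (j x1 : Fin ℓ) (x2 : Fin s) :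
    (∑ a : Fin s, c a • (Pi.single (j, a) 1 : Fin ℓ × Fin s → F)) (x1, x2)
      = if x1 = j then c x2 else 0 := by
  rw [Finset.sum_apply]
  simp only [Pi.smul_apply, Pi.single_apply, Prod.mk.injEq, smul_eq_mul]
  split_ifs with h
  · subst h
    rw [Finset.sum_eq_single x2]
    · simp
    · intro b _ hb
      have : ¬ x2 = b := fun h => hb h.symm
      simp [this]
    · simp
  · apply Finset.sum_eq_zero; intro a _; simp [h]

lemma gj_col_mid (p : Polynomial F) (j : Fin ℓ) (b : Fin s) (hb : (b:ℕ)+1 < s) :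
    genJordanBlock F s ℓ p *ᵥ Pi.single (j, b) 1 = Pi.single (j, ⟨b+1, hb⟩) 1 := by
  rw [Matrix.mulVec_single]
  funext x
  obtain ⟨x1, x2⟩ := x
  simp only [genJordanBlock, companionMat, Emat, Matrix.of_apply, Pi.single_apply,
    Prod.mk.injEq, Fin.ext_iff, mul_one]
  have hb' : (b:ℕ) ≠ s - 1 := by omega
  split_ifs with h1 h2 h3 h4 h5 <;> simp_all <;> omega

lemma gj_col_last (p : Polynomial F) (j : Fin ℓ) (hj : (j:ℕ)+1 < ℓ) (hs : 0 < s) :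
    genJordanBlock F s ℓ p *ᵥ Pi.single (j, ⟨s-1, by omega⟩) 1 =
      Pi.single ((⟨j+1, hj⟩ : Fin ℓ), (⟨0, hs⟩ : Fin s)) 1
        - ∑ a : Fin s, p.coeff (a:ℕ) • (Pi.single (j, a) 1 : Fin ℓ × Fin s → F) := by
  rw [Matrix.mulVec_single]
  funext x
  obtain ⟨x1, x2⟩ := x
  simp only [Pi.sub_apply, sum_coeff_single_apply, Pi.single_apply, Prod.mk.injEq,
    Fin.ext_iff, mul_one]
  simp only [genJordanBlock, companionMat, Emat, Matrix.of_apply, Fin.ext_iff]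
  split_ifs <;> simp_all

lemma gj_pow_mulVec (p : Polynomial F) (j : Fin ℓ) (hs : 0 < s) (i : ℕ) (hi : i < s) :
    (genJordanBlock F s ℓ p) ^ i *ᵥ Pi.single (j, (⟨0, hs⟩ : Fin s)) 1
      = Pi.single (j, (⟨i, hi⟩ : Fin s)) 1 := by
  induction i with
  | zero => rw [pow_zero, Matrix.one_mulVec]
  | succ i ih =>
    rw [pow_succ', ← Matrix.mulVec_mulVec, ih (by omega)]
    exact gj_col_mid p j ⟨i, by omega⟩ hi

lemma gj_aeval_step (p : Polynomial F) (hmonic : p.Monic) (hdeg : p.natDegree = s)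
    (hs : 0 < s) (j : Fin ℓ) (hj : (j:ℕ)+1 < ℓ) :
    aeval (genJordanBlock F s ℓ p) p *ᵥ Pi.single (j, (⟨0, hs⟩ : Fin s)) 1
      = Pi.single ((⟨j+1, hj⟩ : Fin ℓ), (⟨0, hs⟩ : Fin s)) 1 := by
  set G := genJordanBlock F s ℓ p with hG
  have hcs : p.coeff s = 1 := by rw [← hdeg]; exact hmonic.coeff_natDegree
  have hGs : G ^ s *ᵥ Pi.single (j, (⟨0, hs⟩ : Fin s)) 1
      = Pi.single ((⟨j+1, hj⟩ : Fin ℓ), (⟨0, hs⟩ : Fin s)) 1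
        - ∑ a : Fin s, p.coeff (a:ℕ) • (Pi.single (j, a) 1 : Fin ℓ × Fin s → F) := by
    have hsplit : s = (s-1) + 1 := by omega
    have hpow : G ^ s = G * G ^ (s-1) :=
      (congrArg (G ^ ·) hsplit).trans (pow_succ' G (s-1))
    rw [hpow, ← Matrix.mulVec_mulVec, gj_pow_mulVec p j hs (s-1) (by omega)]
    exact gj_col_last p j hj hs
  have hterm : ∀ i ∈ Finset.range s,
      (p.coeff i • G ^ i) *ᵥ Pi.single (j, (⟨0, hs⟩ : Fin s)) 1
        = fun x : Fin ℓ × Fin s => if x.1 = j ∧ (x.2:ℕ) = i then p.coeff i else 0 := by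
    intro i hi
    rw [Finset.mem_range] at hi
    rw [smul_mulVec, gj_pow_mulVec p j hs i hi]
    funext x
    obtain ⟨x1, x2⟩ := x
    simp only [Pi.smul_apply, Pi.single_apply, Prod.mk.injEq, Fin.ext_iff, smul_eq_mul]
    split_ifs <;> simp_all
  have hmain : ∑ i ∈ Finset.range s, (p.coeff i • G ^ i) *ᵥ Pi.single (j, (⟨0, hs⟩ : Fin s)) 1
      = ∑ a : Fin s, p.coeff (a:ℕ) • (Pi.single (j, a) 1 : Fin ℓ × Fin s → F) := by
    rw [Finset.sum_congr rfl hterm]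
    funext x
    obtain ⟨x1, x2⟩ := x
    rw [Finset.sum_apply, sum_coeff_single_apply]
    by_cases h : x1 = j
    · simp only [h, true_and, if_true]
      rw [Finset.sum_ite_eq]
      simp [x2.is_lt]
    · simp [h]
  rw [aeval_eq_sum_range, hdeg, mySum_mulVec, Finset.sum_range_succ, hmain,
    smul_mulVec, hcs, one_smul, hGs]
  abel

lemma gj_cyclic (p : Polynomial F) (hmonic : p.Monic) (hdeg : p.natDegree = s)
    (hs : 0 < s) (hl : 0 < ℓ) (j : Fin ℓ) (b : Fin s) :
    (genJordanBlock F s ℓ p ^ (b:ℕ) * (aeval (genJordanBlock F s ℓ p) p) ^ (j:ℕ))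
      *ᵥ Pi.single ((⟨0, hl⟩ : Fin ℓ), (⟨0, hs⟩ : Fin s)) 1 = Pi.single (j, b) 1 := by
  set G := genJordanBlock F s ℓ p with hG
  have hstep : ∀ (jn : ℕ) (hjn : jn < ℓ),
      (aeval G p) ^ jn *ᵥ Pi.single ((⟨0, hl⟩ : Fin ℓ), (⟨0, hs⟩ : Fin s)) 1
        = Pi.single ((⟨jn, hjn⟩ : Fin ℓ), (⟨0, hs⟩ : Fin s)) 1 := by
    intro jn
    induction jn with
    | zero => intro _; rw [pow_zero, Matrix.one_mulVec]
    | succ jn ih =>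
      intro hjn
      rw [pow_succ', ← Matrix.mulVec_mulVec, ih (by omega)]
      exact gj_aeval_step p hmonic hdeg hs ⟨jn, by omega⟩ hjn
  rw [← Matrix.mulVec_mulVec, hstep (j:ℕ) j.is_lt]
  exact gj_pow_mulVec p j hs (b:ℕ) b.is_lt

end Aux

/-- the centralizer of the generalized Jordan block of size `ℓ`
associated with a monic irreducible polynomial of degree `s` is an `F`-vector
subspace of `M_{sℓ}(F)` of dimension `ℓs`. -/
theorem centralizer_genJordanBlock_dim
    {F : Type*} [Field F] {s ℓ : ℕ}
    (p : Polynomial F) (hmonic : p.Monic) (hirr : Irreducible p)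
    (hdeg : p.natDegree = s) :
    ∃ S : Submodule F (Matrix (Fin ℓ × Fin s) (Fin ℓ × Fin s) F),
      (↑S = {X : Matrix (Fin ℓ × Fin s) (Fin ℓ × Fin s) F |
          genJordanBlock F s ℓ p * X = X * genJordanBlock F s ℓ p}) ∧
      Module.finrank F S = ℓ * s := by
  classical
  set G := genJordanBlock F s ℓ p with hGdef
  let S : Submodule F (Matrix (Fin ℓ × Fin s) (Fin ℓ × Fin s) F) :=
    { carrier := {X | G * X = X * G}
      add_mem' := by
        intro a b ha hb
        simp only [Set.mem_setOf_eq] at *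
        rw [Matrix.mul_add, Matrix.add_mul, ha, hb]
      zero_mem' := by simp
      smul_mem' := by
        intro c X hX
        simp only [Set.mem_setOf_eq] at *
        rw [Matrix.mul_smul, Matrix.smul_mul, hX] }
  refine ⟨S, rfl, ?_⟩
  rcases Nat.eq_zero_or_pos ℓ with hl | hl
  · subst hl
    haveI : IsEmpty (Fin 0 × Fin s) := by infer_instance
    haveI : Subsingleton (Matrix (Fin 0 × Fin s) (Fin 0 × Fin s) F) := by
      constructor; intro a b; ext x y; exact absurd x.1.2 (by omega)
    haveI : Subsingleton S := ⟨fun a b => Subtype.ext (Subsingleton.elim _ _)⟩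
    simp [Module.finrank_zero_of_subsingleton]
  · have hs : 0 < s := by rw [← hdeg]; exact hirr.natDegree_pos
    set v : Fin ℓ × Fin s → F := Pi.single ((⟨0, hl⟩ : Fin ℓ), (⟨0, hs⟩ : Fin s)) 1 with hv
    let φ : S →ₗ[F] (Fin ℓ × Fin s → F) :=
      { toFun := fun X => (X : Matrix (Fin ℓ × Fin s) (Fin ℓ × Fin s) F) *ᵥ v
        map_add' := by intro X Y; simp [Matrix.add_mulVec]
        map_smul' := by intro c X; simp [smul_mulVec] }
    have hGcomm : ∀ j b : ℕ, Commute G (G ^ b * (aeval G p) ^ j) := by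
      intro j b
      have h2 : Commute G (aeval G p) := by
        rw [aeval_eq_sum_range]
        exact Commute.sum_right _ _ _
          (fun i _ => ((Commute.refl G).pow_right i).smul_right _)
      exact ((Commute.refl G).pow_right b).mul_right (h2.pow_right j)
    have hM : ∀ (j : Fin ℓ) (b : Fin s), (G ^ (b:ℕ) * (aeval G p) ^ (j:ℕ)) ∈ S := fun j b =>
      hGcomm (j:ℕ) (b:ℕ)
    have hinj : Function.Injective φ := by
      rw [injective_iff_map_eq_zero]
      intro X hX0
      have hX0' : (X : Matrix (Fin ℓ × Fin s) (Fin ℓ × Fin s) F) *ᵥ v = 0 := hX0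
      have hXcomm : ∀ j b : ℕ,
          (X : Matrix (Fin ℓ × Fin s) (Fin ℓ × Fin s) F) * (G ^ b * (aeval G p) ^ j)
            = (G ^ b * (aeval G p) ^ j) * (X : Matrix (Fin ℓ × Fin s) (Fin ℓ × Fin s) F) := by
        intro j b
        have hGX : Commute G (X : Matrix (Fin ℓ × Fin s) (Fin ℓ × Fin s) F) := X.2
        have h2 : Commute (aeval G p) (X : Matrix (Fin ℓ × Fin s) (Fin ℓ × Fin s) F) := by
          rw [aeval_eq_sum_range]
          exact Commute.sum_left _ _ _ (fun i _ => ((hGX.pow_left i).smul_left _))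
        exact (((hGX.pow_left b).mul_left (h2.pow_left j)).symm)
      have hcols : ∀ (j : Fin ℓ) (b : Fin s),
          (X : Matrix (Fin ℓ × Fin s) (Fin ℓ × Fin s) F) *ᵥ Pi.single (j, b) 1 = 0 := by
        intro j b
        rw [← gj_cyclic p hmonic hdeg hs hl j b, Matrix.mulVec_mulVec, hXcomm,
          ← Matrix.mulVec_mulVec, hX0', Matrix.mulVec_zero]
      apply Subtype.ext
      ext x y
      have h1 := congrFun (hcols y.1 y.2) x
      rw [Matrix.mulVec_single] at h1
      simpa using h1
    have hsurj : Function.Surjective φ := by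
      intro w
      refine ⟨⟨∑ y : Fin ℓ × Fin s, w y • (G ^ (y.2:ℕ) * (aeval G p) ^ (y.1:ℕ)), ?_⟩, ?_⟩
      · exact Submodule.sum_mem S fun y _ => Submodule.smul_mem S _ (hM y.1 y.2)
      · show (∑ y : Fin ℓ × Fin s, w y • (G ^ (y.2:ℕ) * (aeval G p) ^ (y.1:ℕ))) *ᵥ v = w
        rw [mySum_mulVec]
        have : ∀ y : Fin ℓ × Fin s,
            (w y • (G ^ (y.2:ℕ) * (aeval G p) ^ (y.1:ℕ))) *ᵥ v
              = w y • (Pi.single y 1 : Fin ℓ × Fin s → F) := by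
          intro y
          rw [smul_mulVec, hv, gj_cyclic p hmonic hdeg hs hl y.1 y.2]
        rw [Finset.sum_congr rfl fun y _ => this y]
        exact mySum_smul_single w
    have e := LinearEquiv.ofBijective φ ⟨hinj, hsurj⟩
    rw [e.finrank_eq, Module.finrank_fintype_fun_eq_card]
    simp [Fintype.card_prod, mul_comm]
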